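/- Let F be a separating union-closed family and x ∈ U_F an optimal element. Then the intersection I_x = ⋂_{A ∈ F_x} A equals {x}. -/
import Mathlib

/-- If `F` is a separating union-closed family and `x ∈ U_F` is optimal, then
`⋂_{A ∈ F_x} A = {x}`. -/
theorem stmt_10 {α : Type*} (F : Set (Set α))
    (hUC : ∀ A ∈ F, ∀ B ∈ F, A ∪ B ∈ F)
    (hsep : ∀ x ∈ ⋃₀ F, ∀ y ∈ ⋃₀ F,
      {A ∈ F | x ∈ A} = {A ∈ F | y ∈ A} → x = y)
    (x : α) (hx : x ∈ ⋃₀ F)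
    (hopt : ∀ y ∈ ⋃₀ F, {A ∈ F | x ∈ A} ⊆ {A ∈ F | y ∈ A} →
      {A ∈ F | y ∈ A} = {A ∈ F | x ∈ A}) :
    ⋂₀ {A | A ∈ F ∧ x ∈ A} = {x} := by
  ext y
  simp only [Set.mem_sInter, Set.mem_setOf_eq, Set.mem_singleton_iff]
  constructor
  · intro hy
    obtain ⟨A, hA, hxA⟩ := hx
    have hyU : y ∈ ⋃₀ F := ⟨A, hA, hy A ⟨hA, hxA⟩⟩
    have hsub : {A ∈ F | x ∈ A} ⊆ {A ∈ F | y ∈ A} := fun B hB => ⟨hB.1, hy B hB⟩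
    exact (hsep y hyU x ⟨A, hA, hxA⟩ (hopt y hyU hsub))
  · rintro rfl A ⟨_, hxA⟩
    exact hxA
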